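/- Let $P_L$ be $1/2$ times the Laplacian of the path graph on $L$ vertices and let $E_0$ be the diagonal matrix with a single $1$ in position $(0,0)$. Then the smallest eigenvalue of $P_L + \frac{1}{2}E_0$ equals $1 - \cos(\pi/(2L+1))$, and consequently the smallest eigenvalue of $P_L + E_0$ is at least $1 - \cos(\pi/(2L+1))$. -/

import Mathlib

open Matrix

/-- Half the Laplacian of the path graph on `L` vertices. -/
noncomputable def pathMat (L : ℕ) : Matrix (Fin L) (Fin L) ℝ :=
  Matrix.of fun i j =>
    if i = j then
      ((if (i : ℕ) + 1 < L then (1/2 : ℝ) else 0) + (if 0 < (i : ℕ) then (1/2 : ℝ) else 0))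
    else if (i : ℕ) + 1 = (j : ℕ) ∨ (j : ℕ) + 1 = (i : ℕ) then -(1/2 : ℝ) else 0

/-- Diagonal matrix with a single `1` at position `(0,0)`. -/
noncomputable def e0Diag (L : ℕ) : Matrix (Fin L) (Fin L) ℝ :=
  Matrix.of fun i j => if i = j ∧ (i : ℕ) = 0 then 1 else 0

noncomputable def th (L : ℕ) : ℝ := Real.pi / (2 * (L : ℝ) + 1)

noncomputable def wv (L : ℕ) : Fin L → ℝ := fun j => Real.sin (((j : ℕ) + 1) * th L)

noncomputable def dcoef (L : ℕ) (i : Fin L) : ℝ :=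
  (if (i : ℕ) + 1 < L then (1/2 : ℝ) else 0) + (if 0 < (i : ℕ) then (1/2 : ℝ) else 0)
    + (if (i : ℕ) = 0 then (1/2 : ℝ) else 0)

lemma sum_ite_nat {L : ℕ} (g : Fin L → ℝ) (n : ℕ) :
    ∑ j : Fin L, (if n = (j : ℕ) then g j else 0)
      = if h : n < L then g ⟨n, h⟩ else 0 := by
  split_ifs with h
  · have hiff : ∀ j : Fin L, (n = (j : ℕ)) ↔ (j = ⟨n, h⟩) := by
      intro j
      constructor
      · intro hj; exact Fin.ext hj.symm
      · intro hj; rw [hj]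
    simp only [hiff]
    rw [Finset.sum_ite_eq' Finset.univ (⟨n, h⟩ : Fin L) g, if_pos (Finset.mem_univ _)]
  · apply Finset.sum_eq_zero
    intro j _
    rw [if_neg]
    have := j.2
    omega

lemma entry_eq (L : ℕ) (i j : Fin L) (x : ℝ) :
    (pathMat L + (1/2 : ℝ) • e0Diag L) i j * x
      = (if (i : ℕ) = (j : ℕ) then dcoef L i * x else 0)
      + (if (i : ℕ) + 1 = (j : ℕ) then -(1/2) * x else 0)
      + (if (j : ℕ) + 1 = (i : ℕ) then -(1/2) * x else 0) := by
  simp only [Matrix.add_apply, Matrix.smul_apply, pathMat, e0Diag, Matrix.of_apply,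
    smul_eq_mul, dcoef, Fin.ext_iff]
  split_ifs <;> first | ring1 | (exfalso; omega)

lemma mulVec_eq (L : ℕ) (f : Fin L → ℝ) (i : Fin L) :
    (pathMat L + (1/2 : ℝ) • e0Diag L).mulVec f i
      = dcoef L i * f i
      + (if h : (i : ℕ) + 1 < L then -(1/2) * f ⟨(i : ℕ) + 1, h⟩ else 0)
      + (if h : 0 < (i : ℕ) then
          -(1/2) * f ⟨(i : ℕ) - 1, Nat.lt_of_le_of_lt (Nat.sub_le _ _) i.2⟩ else 0) := by
  have s1 : ∑ j : Fin L, (if (i : ℕ) = (j : ℕ) then dcoef L i * f j else 0)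
      = dcoef L i * f i := by
    rw [sum_ite_nat (fun j => dcoef L i * f j) (i : ℕ), dif_pos i.2]
  have s2 : ∑ j : Fin L, (if (i : ℕ) + 1 = (j : ℕ) then -(1/2) * f j else 0)
      = (if h : (i : ℕ) + 1 < L then -(1/2) * f ⟨(i : ℕ) + 1, h⟩ else 0) :=
    sum_ite_nat (fun j => -(1/2) * f j) ((i : ℕ) + 1)
  have s3 : ∑ j : Fin L, (if (j : ℕ) + 1 = (i : ℕ) then -(1/2) * f j else 0)
      = (if h : 0 < (i : ℕ) then
          -(1/2) * f ⟨(i : ℕ) - 1, Nat.lt_of_le_of_lt (Nat.sub_le _ _) i.2⟩ else 0) := by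
    by_cases h0 : 0 < (i : ℕ)
    · rw [dif_pos h0]
      have hiff : ∀ j : Fin L, ((j : ℕ) + 1 = (i : ℕ)) ↔ ((i : ℕ) - 1 = (j : ℕ)) :=
        fun j => by omega
      simp only [hiff]
      rw [sum_ite_nat (fun j => -(1/2) * f j) ((i : ℕ) - 1),
        dif_pos (Nat.lt_of_le_of_lt (Nat.sub_le _ _) i.2)]
    · rw [dif_neg h0]
      apply Finset.sum_eq_zero
      intro j _
      rw [if_neg]
      omega
  simp only [Matrix.mulVec, dotProduct]
  rw [Finset.sum_congr rfl (fun j _ => entry_eq L i j (f j)),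
    Finset.sum_add_distrib, Finset.sum_add_distrib, s1, s2, s3]

lemma th_pos (L : ℕ) : 0 < th L := by
  unfold th
  positivity

lemma wv_pos (L : ℕ) (j : Fin L) : 0 < wv L j := by
  apply Real.sin_pos_of_pos_of_lt_pi
  · have := th_pos L
    positivity
  · have hj : ((j : ℕ) : ℝ) + 1 ≤ (L : ℝ) := by
      have := j.2
      exact_mod_cast Nat.succ_le_of_lt this
    have hc : (0 : ℝ) < 2 * (L : ℝ) + 1 := by positivity
    unfold th
    rw [mul_div_assoc', div_lt_iff₀ hc]
    nlinarith [Real.pi_pos]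

lemma sin_L_succ (L : ℕ) :
    Real.sin (((L : ℝ) + 1) * th L) = Real.sin ((L : ℝ) * th L) := by
  have hc : (2 * (L : ℝ) + 1) ≠ 0 := by positivity
  have h : ((L : ℝ) + 1) * th L = Real.pi - (L : ℝ) * th L := by
    unfold th
    field_simp
    ring
  rw [h, Real.sin_pi_sub]

lemma eigen (L : ℕ) (hL : 1 ≤ L) :
    (pathMat L + (1/2 : ℝ) • e0Diag L).mulVec (wv L) = (1 - Real.cos (th L)) • wv L := by
  funext i
  rw [mulVec_eq]
  simp only [Pi.smul_apply, smul_eq_mul, wv, dcoef]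
  set t := th L with ht
  by_cases h1 : (i : ℕ) + 1 < L <;> by_cases h2 : 0 < (i : ℕ)
  · -- interior
    rw [dif_pos h1, dif_pos h2, if_pos h1, if_pos h2, if_neg (by omega)]
    have hc : (((i : ℕ) - 1 : ℕ) : ℝ) = ((i : ℕ) : ℝ) - 1 := by
      have : 1 ≤ (i : ℕ) := h2
      push_cast [this]
      ring
    simp only [hc]
    have e1 : ((((i : ℕ) + 1 : ℕ)) : ℝ) + 1 = (((i : ℕ) : ℝ) + 1) + 1 := by push_cast; ring
    rw [e1]
    have e2 : ((((i : ℕ) : ℝ) + 1) + 1) * t = (((i : ℕ) : ℝ) + 1) * t + t := by ring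
    have e3 : (((i : ℕ) : ℝ) - 1 + 1) * t = (((i : ℕ) : ℝ) + 1) * t - t := by ring
    rw [e2, e3, Real.sin_add, Real.sin_sub]
    ring
  · -- left boundary, L ≥ 2
    have hi0 : (i : ℕ) = 0 := by omega
    rw [dif_pos h1, dif_neg h2, if_pos h1, if_neg h2, if_pos hi0]
    simp only [hi0]
    have e1 : ((((0 : ℕ) + 1 : ℕ)) : ℝ) + 1 = 2 := by norm_num
    rw [e1]
    have e0 : (((0 : ℕ) : ℝ) + 1) * t = t := by norm_num
    rw [e0, show (2 : ℝ) * t = 2 * t from rfl, Real.sin_two_mul]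
    ring
  · -- right boundary, i = L - 1 ≥ 1
    have hiL : (i : ℕ) + 1 = L := by have := i.2; omega
    rw [dif_neg h1, dif_pos h2, if_neg h1, if_pos h2, if_neg (by omega)]
    have hc : (((i : ℕ) - 1 : ℕ) : ℝ) = ((i : ℕ) : ℝ) - 1 := by
      have : 1 ≤ (i : ℕ) := h2
      push_cast [this]
      ring
    simp only [hc]
    have hLc : (((i : ℕ) : ℝ) + 1) = (L : ℝ) := by exact_mod_cast congrArg (Nat.cast : ℕ → ℝ) hiL
    rw [hLc]
    have hs := sin_L_succ L
    rw [show ((L : ℝ) + 1) * t = (L : ℝ) * t + t from by ring, Real.sin_add] at hs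
    have e3 : (((i : ℕ) : ℝ) - 1 + 1) * t = (L : ℝ) * t - t := by
      rw [← hLc]; ring
    rw [e3, Real.sin_sub]
    nlinarith [hs]
  · -- L = 1
    have hL1 : L = 1 := by have := i.2; omega
    have hi0 : (i : ℕ) = 0 := by omega
    rw [dif_neg h1, dif_neg h2, if_neg h1, if_neg h2, if_pos hi0]
    have hcos : Real.cos t = 1/2 := by
      rw [ht]
      unfold th
      rw [hL1, show (2 * ((1 : ℕ) : ℝ) + 1) = 3 by norm_num]
      exact Real.cos_pi_div_three
    rw [hcos]
    ring

lemma key {L : ℕ} (A : Matrix (Fin L) (Fin L) ℝ) (w : Fin L → ℝ)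
    (hw : ∀ i, 0 < w i) (hoff : ∀ i j, i ≠ j → A i j ≤ 0)
    (hAw : ∀ i, 0 ≤ A.mulVec w i) {c : ℝ} {v : Fin L → ℝ} (hv : v ≠ 0)
    (heq : A.mulVec v = c • v) : 0 ≤ c := by
  obtain ⟨k, hk⟩ : ∃ k, v k ≠ 0 := Function.ne_iff.mp hv
  -- choose u = ±v with u k > 0
  obtain ⟨u, huk, hueq⟩ : ∃ u : Fin L → ℝ, 0 < u k ∧ A.mulVec u = c • u := by
    rcases lt_or_gt_of_ne hk with h | h
    · refine ⟨-v, by simpa using h, ?_⟩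
      have : A.mulVec (-v) = -(A.mulVec v) := by
        simp [Matrix.mulVec_neg]
      rw [this, heq]
      ext i
      simp
    · exact ⟨v, h, heq⟩
  have hne : (Finset.univ : Finset (Fin L)).Nonempty := ⟨k, Finset.mem_univ k⟩
  obtain ⟨i, -, hi⟩ := Finset.exists_max_image Finset.univ (fun j => u j / w j) hne
  set t := u i / w i with hti
  have ht0 : 0 < t := lt_of_lt_of_le (div_pos huk (hw k)) (hi k (Finset.mem_univ k))
  have hub : ∀ j, u j ≤ t * w j := by
    intro j
    have := hi j (Finset.mem_univ j)
    calc u j = (u j / w j) * w j := (div_mul_cancel₀ (u j) (ne_of_gt (hw j))).symm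
    _ ≤ t * w j := by
        apply mul_le_mul_of_nonneg_right this (le_of_lt (hw j))
  have hui : u i = t * w i := by
    rw [hti, div_mul_cancel₀ (u i) (ne_of_gt (hw i))]
  have hstep : t * (A.mulVec w i) ≤ c * u i := by
    have h1 : ∑ j, A i j * (t * w j) ≤ ∑ j, A i j * u j := by
      apply Finset.sum_le_sum
      intro j _
      by_cases hji : j = i
      · subst hji; rw [hui]
      · have := hoff i j (fun h => hji h.symm)
        nlinarith [hub j]
    have h2 : (A.mulVec u) i = ∑ j, A i j * u j := rfl
    have h3 : (A.mulVec w) i = ∑ j, A i j * w j := rfl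
    have h4 : t * (A.mulVec w i) = ∑ j, A i j * (t * w j) := by
      rw [h3, Finset.mul_sum]
      apply Finset.sum_congr rfl
      intro j _
      ring
    have h5 : (A.mulVec u) i = c * u i := by rw [hueq]; simp
    rw [h4]
    calc ∑ j, A i j * (t * w j) ≤ ∑ j, A i j * u j := h1
    _ = c * u i := by rw [← h2, h5]
  have hpos : 0 < u i := by rw [hui]; exact mul_pos ht0 (hw i)
  nlinarith [mul_nonneg (le_of_lt ht0) (hAw i)]

lemma e0_mulVec_nonneg (L : ℕ) (i : Fin L) : 0 ≤ (e0Diag L).mulVec (wv L) i := by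
  simp only [Matrix.mulVec, dotProduct]
  apply Finset.sum_nonneg
  intro j _
  simp only [e0Diag, Matrix.of_apply]
  split_ifs
  · simpa using le_of_lt (wv_pos L j)
  · simp

/-- The smallest eigenvalue of `P_L + (1/2)E₀` equals `1 - cos(π/(2L+1))`, and consequently
the smallest eigenvalue of `P_L + E₀` is at least `1 - cos(π/(2L+1))`. -/
theorem stmt13 (L : ℕ) (hL : 1 ≤ L) :
    IsLeast {μ : ℝ | ∃ v : Fin L → ℝ, v ≠ 0 ∧
        (pathMat L + (1/2 : ℝ) • e0Diag L).mulVec v = μ • v}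
      (1 - Real.cos (Real.pi / (2 * (L : ℝ) + 1))) ∧
    (∀ (μ : ℝ) (v : Fin L → ℝ), v ≠ 0 → (pathMat L + e0Diag L).mulVec v = μ • v →
      1 - Real.cos (Real.pi / (2 * (L : ℝ) + 1)) ≤ μ) := by
  have hμ₀ : (1 - Real.cos (Real.pi / (2 * (L : ℝ) + 1))) = 1 - Real.cos (th L) := rfl
  rw [hμ₀]
  set μ₀ := 1 - Real.cos (th L) with hdef
  set M := pathMat L + (1/2 : ℝ) • e0Diag L with hM
  have hwne : wv L ≠ 0 := by
    intro h
    exact absurd (congrFun h ⟨0, hL⟩) (ne_of_gt (wv_pos L ⟨0, hL⟩))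
  -- off-diagonal nonpositivity shared
  have hoffM : ∀ i j : Fin L, i ≠ j → M i j ≤ 0 := by
    intro i j hij
    simp only [hM, Matrix.add_apply, Matrix.smul_apply, pathMat, e0Diag, Matrix.of_apply,
      smul_eq_mul]
    rw [if_neg hij]
    split_ifs <;> first | (rename_i hc; exact absurd hc.1 hij) | norm_num
  have he0off : ∀ i j : Fin L, i ≠ j → e0Diag L i j = 0 := by
    intro i j hij
    simp only [e0Diag, Matrix.of_apply]
    rw [if_neg (fun h => hij h.1)]
  refine ⟨⟨⟨wv L, hwne, eigen L hL⟩, ?_⟩, ?_⟩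
  · -- lower bound for M
    rintro μ ⟨v, hv, hev⟩
    set A := M - μ₀ • (1 : Matrix (Fin L) (Fin L) ℝ) with hA
    have hoff : ∀ i j : Fin L, i ≠ j → A i j ≤ 0 := by
      intro i j hij
      simp only [hA, Matrix.sub_apply, Matrix.smul_apply, Matrix.one_apply_ne hij,
        smul_eq_mul, mul_zero, sub_zero]
      exact hoffM i j hij
    have hAw : ∀ i, 0 ≤ A.mulVec (wv L) i := by
      have h0 : A.mulVec (wv L) = 0 := by
        rw [hA, Matrix.sub_mulVec, eigen L hL, Matrix.smul_mulVec, Matrix.one_mulVec]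
        simp [hdef]
      intro i
      rw [h0]
      simp
    have hAv : A.mulVec v = (μ - μ₀) • v := by
      rw [hA, Matrix.sub_mulVec, hev, Matrix.smul_mulVec, Matrix.one_mulVec]
      funext i
      simp only [Pi.sub_apply, Pi.smul_apply, smul_eq_mul]
      ring
    have := key A (wv L) (wv_pos L) hoff hAw hv hAv
    linarith
  · -- lower bound for pathMat + e0Diag
    intro μ v hv hev
    have hsplit : pathMat L + e0Diag L = M + (1/2 : ℝ) • e0Diag L := by
      rw [hM]
      funext i j
      simp only [Matrix.add_apply, Matrix.smul_apply, smul_eq_mul]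
      ring
    set A := (pathMat L + e0Diag L) - μ₀ • (1 : Matrix (Fin L) (Fin L) ℝ) with hA
    have hoff : ∀ i j : Fin L, i ≠ j → A i j ≤ 0 := by
      intro i j hij
      simp only [hA, Matrix.sub_apply, Matrix.smul_apply, Matrix.one_apply_ne hij,
        smul_eq_mul, mul_zero, sub_zero, Matrix.add_apply, he0off i j hij, add_zero]
      have := hoffM i j hij
      simp only [hM, Matrix.add_apply, Matrix.smul_apply, smul_eq_mul] at this
      have h0 : e0Diag L i j = 0 := he0off i j hij
      rw [h0] at this
      linarith
    have hAw : ∀ i, 0 ≤ A.mulVec (wv L) i := by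
      have h0 : A.mulVec (wv L) = (1/2 : ℝ) • (e0Diag L).mulVec (wv L) := by
        rw [hA, hsplit, Matrix.sub_mulVec, Matrix.add_mulVec, eigen L hL,
          Matrix.smul_mulVec, Matrix.smul_mulVec, Matrix.one_mulVec]
        funext i
        simp only [Pi.sub_apply, Pi.add_apply, Pi.smul_apply, smul_eq_mul]
        ring
      intro i
      rw [h0]
      simp only [Pi.smul_apply, smul_eq_mul]
      have := e0_mulVec_nonneg L i
      linarith
    have hAv : A.mulVec v = (μ - μ₀) • v := by
      rw [hA, Matrix.sub_mulVec, hev, Matrix.smul_mulVec, Matrix.one_mulVec]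
      funext i
      simp only [Pi.sub_apply, Pi.smul_apply, smul_eq_mul]
      ring
    have := key A (wv L) (wv_pos L) hoff hAw hv hAv
    linarith
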